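/- arXiv:1712.02487 — 4 statements merged into one kernel-verified Lean document; each statement's English description precedes it below -/
import Mathlib

section
/- Assume GCH and Chang's conjecture (ℵ_{ω+1}, ℵ_ω) ↠ (ℵ₁, ℵ₀), stated as: for every structure 𝓐 in a countable language with universe of cardinality ℵ_{ω+1} and a distinguished unary predicate of cardinality ℵ_ω, there is an elementary substructure 𝓑 of cardinality ℵ₁ whose intersection with the predicate is countable. Then KH_{ℵ_ω} fails: there is no family 𝓕 ⊆ 𝒫(ℵ_ω) with |𝓕| > ℵ_ω such that |𝓕↾X| ≤ |X| for every infinite X ⊆ ℵ_ω with |X| < ℵ_ω. -/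
open Cardinal Set FirstOrder Ordinal

def ChangsConjectureAlephOmega : Prop :=
  ∀ (L : FirstOrder.Language.{0, 0}), L.card ≤ ℵ₀ →
    ∀ (M : Type) (_ : L.Structure M) (A : Set M),
      #M = Cardinal.aleph (ω + 1) → #A = Cardinal.aleph ω →
      ∃ B : L.ElementarySubstructure M,
        #(B : Set M) = Cardinal.aleph 1 ∧ #((B : Set M) ∩ A : Set M) ≤ ℵ₀

def KHFun : ℕ → Type
  | 0 => ℕ
  | 2 => Unit
  | _ => Empty

instance KHFun.countable : ∀ n, Countable (KHFun n)
  | 0 => inferInstanceAs (Countable ℕ)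
  | 1 => inferInstanceAs (Countable Empty)
  | 2 => inferInstanceAs (Countable Unit)
  | (_+3) => inferInstanceAs (Countable Empty)

def KHLang : FirstOrder.Language.{0,0} := ⟨KHFun, fun _ => Empty⟩

instance : ∀ n, Countable (KHLang.Functions n) := KHFun.countable
instance : ∀ n, Countable (KHLang.Relations n) := fun _ => inferInstanceAs (Countable Empty)

theorem KHLang.card_le : KHLang.card ≤ ℵ₀ := by
  have h1 : Countable (Σ l, KHLang.Functions l) := inferInstance
  have h2 : Countable (Σ l, KHLang.Relations l) := inferInstance
  have : Countable KHLang.Symbols := inferInstanceAs (Countable (_ ⊕ _))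
  exact mk_le_aleph0

/-- Assume GCH and Chang's conjecture `(ℵ_{ω+1}, ℵ_ω) ↠ (ℵ₁, ℵ₀)`.  Then `KH_{ℵ_ω}`
fails: there is no family `𝓕 ⊆ 𝒫(ℵ_ω)` with `|𝓕| > ℵ_ω` and `|𝓕↾X| ≤ |X|` for
every infinite `X ⊆ ℵ_ω` with `|X| < ℵ_ω`. -/
theorem not_KH_aleph_omega_of_changsConjecture
    (hGCH : ∀ κ : Cardinal.{0}, ℵ₀ ≤ κ → 2 ^ κ = Order.succ κ)
    (hCC : ChangsConjectureAlephOmega) :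
    ∀ (S : Type) (_ : #S = Cardinal.aleph ω),
      ¬ ∃ F : Set (Set S), Cardinal.aleph ω < #F ∧
          ∀ X : Set S, ℵ₀ ≤ #X → #X < Cardinal.aleph ω →
            #((fun t => t ∩ X) '' F) ≤ #X := by
  classical
  rintro S hS ⟨F, hFbig, hres⟩
  -- S is infinite
  have hSinf : Infinite S := by
    rw [Cardinal.infinite_iff, hS]; exact aleph0_le_aleph ω
  let e : ℕ ↪ S := Infinite.natEmbedding S
  -- #F = aleph (ω+1)
  have hsucc : Cardinal.aleph (ω + 1) = Order.succ (Cardinal.aleph ω) := by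
    rw [Ordinal.add_one_eq_succ, Cardinal.aleph_succ]
  have hFle : #F ≤ Cardinal.aleph (ω + 1) := by
    calc #F ≤ #(Set S) := Cardinal.mk_le_mk_of_subset (Set.subset_univ F) |>.trans_eq (by
                rw [Cardinal.mk_univ])
    _ = 2 ^ #S := Cardinal.mk_set
    _ = Cardinal.aleph (ω + 1) := by
        rw [hS, hGCH _ (aleph0_le_aleph ω), hsucc]
  have hFeq : #F = Cardinal.aleph (ω + 1) := by
    refine le_antisymm hFle ?_
    rw [hsucc]
    exact Order.succ_le_of_lt hFbig
  -- the universe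
  let M : Type := ↥F ⊕ S
  have hM : #M = Cardinal.aleph (ω + 1) := by
    have : #M = #F + #S := by simp [M, Cardinal.mk_sum]
    rw [this, hFeq, hS, Cardinal.add_eq_left (aleph0_le_aleph _)]
    rw [hsucc]
    exact le_of_lt (Order.lt_succ _)
  let A : Set M := Set.range (Sum.inr : S → M)
  have hA : #A = Cardinal.aleph ω := by
    rw [Cardinal.mk_range_eq _ Sum.inr_injective, hS]
  -- the witness function
  obtain ⟨W, hW⟩ : ∃ W : M → M → M, ∀ t t' : ↥F, t ≠ t' →
      ∃ s : S, W (Sum.inl t) (Sum.inl t') = Sum.inr s ∧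
        s ∈ symmDiff (t : Set S) (t' : Set S) := by
    have hex : ∀ t t' : ↥F, ∃ m : M, t ≠ t' →
        ∃ s : S, m = Sum.inr s ∧ s ∈ symmDiff (t : Set S) (t' : Set S) := by
      intro t t'
      by_cases h : t = t'
      · exact ⟨Sum.inl t, fun hc => absurd h hc⟩
      · have hne : (t : Set S) ≠ (t' : Set S) := fun hc => h (Subtype.ext hc)
        obtain ⟨s, hs⟩ := Set.symmDiff_nonempty.mpr hne
        exact ⟨Sum.inr s, fun _ => ⟨s, rfl, hs⟩⟩
    choose W0 hW0 using hex
    exact ⟨fun x y => match x, y with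
      | Sum.inl t, Sum.inl t' => W0 t t'
      | x, _ => x, fun t t' h => hW0 t t' h⟩
  -- the structure
  letI inst : KHLang.Structure M :=
    { funMap := fun {n} f args =>
        match n, f with
        | 0, k => Sum.inr (e k)
        | 1, f => f.elim
        | 2, _ => W (args 0) (args 1)
        | (_+3), f => f.elim
      RelMap := fun {n} r _ => r.elim }
  obtain ⟨B, hB1, hB2⟩ := hCC KHLang KHLang.card_le M inst A hM hA
  -- X
  let X : Set S := {s : S | Sum.inr s ∈ (B : Set M)}
  have hXle : #X ≤ ℵ₀ := by
    refine le_trans ?_ hB2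
    refine Cardinal.mk_le_of_injective (f := fun s => ⟨Sum.inr s.1, s.2, Set.mem_range_self _⟩) ?_
    intro a b hab
    exact Subtype.ext (Sum.inr_injective (congrArg Subtype.val hab))
  have hXconsts : ∀ k : ℕ, e k ∈ X := by
    intro k
    have : ((show KHLang.Constants from k : KHLang.Constants) : M) ∈ B.toSubstructure :=
      B.toSubstructure.constants_mem _
    exact this
  have hXinf : ℵ₀ ≤ #X := by
    rw [Cardinal.aleph0_le_mk_iff]
    exact Infinite.of_injective (fun k : ℕ => (⟨e k, hXconsts k⟩ : X))
      (fun a b hab => e.injective (congrArg Subtype.val hab))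
  have hXlt : #X < Cardinal.aleph ω := lt_of_le_of_lt hXle
    (by rw [← Cardinal.aleph_zero]; exact Cardinal.aleph_lt_aleph.mpr Ordinal.omega0_pos)
  have hXres : #((fun t => t ∩ X) '' F) ≤ ℵ₀ := (hres X hXinf hXlt).trans hXle
  -- key injectivity
  have hinj : ∀ t t' : ↥F, Sum.inl t ∈ (B : Set M) → Sum.inl t' ∈ (B : Set M) →
      (t : Set S) ∩ X = (t' : Set S) ∩ X → t = t' := by
    intro t t' ht ht' hcap
    by_contra h
    obtain ⟨s, hWs, hsym⟩ := hW t t' h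
    have hfm : Sum.inr s ∈ (B : Set M) := by
      have hmem := B.toSubstructure.fun_mem (show KHLang.Functions 2 from Unit.unit)
        ![Sum.inl t, Sum.inl t'] (by
          intro i
          fin_cases i <;> assumption)
      have hred : (Language.Structure.funMap (L := KHLang) (M := M)
          (show KHLang.Functions 2 from Unit.unit) ![Sum.inl t, Sum.inl t'])
          = W (Sum.inl t) (Sum.inl t') := by
        show W (![Sum.inl t, Sum.inl t'] 0) (![Sum.inl t, Sum.inl t'] 1)
          = W (Sum.inl t) (Sum.inl t')
        simp
      rw [hred, hWs] at hmem
      exact hmem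
    have hsX : s ∈ X := hfm
    rw [Set.mem_symmDiff] at hsym
    rcases hsym with ⟨h1, h2⟩ | ⟨h1, h2⟩
    · have : s ∈ (t' : Set S) ∩ X := hcap ▸ Set.mem_inter h1 hsX
      exact h2 this.1
    · have : s ∈ (t : Set S) ∩ X := hcap.symm ▸ Set.mem_inter h1 hsX
      exact h2 this.1
  -- B ∩ inl-part is small
  have hBinl : #((B : Set M) ∩ Set.range (Sum.inl : ↥F → M) : Set M) ≤ ℵ₀ := by
    have hch : ∀ x : ((B : Set M) ∩ Set.range (Sum.inl : ↥F → M) : Set M),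
        ∃ t : ↥F, Sum.inl t = x.1 := fun x => x.2.2
    choose g hg using hch
    refine le_trans ?_ hXres
    refine Cardinal.mk_le_of_injective
      (f := fun x => ⟨((g x : ↥F) : Set S) ∩ X, ⟨(g x : ↥F), (g x).2, rfl⟩⟩) ?_
    intro a b hab
    have hgab : g a = g b := by
      apply hinj
      · rw [hg a]; exact a.2.1
      · rw [hg b]; exact b.2.1
      · exact congrArg Subtype.val hab
    apply Subtype.ext
    rw [← hg a, ← hg b, hgab]
  -- B ∩ A is small, so B is small: contradiction
  have hBsplit : (B : Set M) = ((B : Set M) ∩ Set.range (Sum.inl : ↥F → M)) ∪ ((B : Set M) ∩ A) := by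
    rw [← Set.inter_union_distrib_left, Set.range_inl_union_range_inr, Set.inter_univ]
  have hBsmall : #((B : Set M)) ≤ ℵ₀ := by
    calc #((B : Set M)) ≤ #(((B : Set M) ∩ Set.range (Sum.inl : ↥F → M)) ∪ ((B : Set M) ∩ A) : Set M) := by
          rw [← hBsplit]
    _ ≤ _ + _ := Cardinal.mk_union_le _ _
    _ ≤ ℵ₀ + ℵ₀ := add_le_add hBinl hB2
    _ = ℵ₀ := by simp
  rw [hB1] at hBsmall
  have : (ℵ₀ : Cardinal) < Cardinal.aleph 1 := by
    rw [← Cardinal.aleph_zero]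
    exact Cardinal.aleph_lt_aleph.mpr zero_lt_one
  exact absurd hBsmall (not_le.mpr this)
end

section
/- Assume Chang's conjecture (ℵ_{ω+1}, ℵ_ω) ↠ (ℵ₁, ℵ₀). Then there is no family 𝓕 ⊆ [ℵ_ω]^{ℵ₀} (countable subsets of ℵ_ω) with |𝓕| ≥ ℵ_{ω+1} such that 𝓕↾X = {t ∩ X : t ∈ 𝓕} is countable for every countable infinite X ⊆ ℵ_ω. -/
open Cardinal Set FirstOrder Ordinal

section ChangAux
variable {S : Type} (F₀ : Set (Set S))

private def myRel : (S ⊕ ↥F₀) → (S ⊕ ↥F₀) → Prop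
  | Sum.inl a, Sum.inr t => a ∈ (t : Set S)
  | _, _ => False

private def myStructure : Language.graph.Structure (S ⊕ ↥F₀) where
  funMap := fun f => isEmptyElim f
  RelMap := fun r x => match r with
    | .adj => myRel F₀ (x 0) (x 1)

private def diffFormula : Language.graph.Formula (Fin 2) :=
  ((Language.adj.boundedFormula₂ (&0) (Language.Term.var (Sum.inl 0))).iff
    (Language.adj.boundedFormula₂ (&0) (Language.Term.var (Sum.inl 1))).not).ex

private lemma realize_diffFormula {M : Type} [Language.graph.Structure M] (v : Fin 2 → M) :
    diffFormula.Realize v ↔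
      ∃ a : M, (Language.Structure.RelMap Language.adj ![a, v 0] ↔
        ¬ Language.Structure.RelMap Language.adj ![a, v 1]) := by
  simp only [diffFormula, Language.Formula.Realize, Language.BoundedFormula.realize_ex,
    Language.BoundedFormula.realize_iff, Language.BoundedFormula.realize_not,
    Language.BoundedFormula.realize_rel₂]
  constructor
  · rintro ⟨a, ha⟩; exact ⟨a, by simpa [Fin.snoc] using ha⟩
  · rintro ⟨a, ha⟩; exact ⟨a, by simpa [Fin.snoc] using ha⟩

end ChangAux

/-- Assume Chang's conjecture `(ℵ_{ω+1}, ℵ_ω) ↠ (ℵ₁, ℵ₀)`.  Then there is no family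
`𝓕 ⊆ [ℵ_ω]^{ℵ₀}` of countably infinite subsets of `ℵ_ω` with `|𝓕| ≥ ℵ_{ω+1}` such
that `𝓕↾X = {t ∩ X : t ∈ 𝓕}` is countable for every countably infinite `X ⊆ ℵ_ω`. -/


theorem no_large_countable_family_of_changsConjecture
    (hCC : ChangsConjectureAlephOmega) :
    ∀ (S : Type) (_ : #S = Cardinal.aleph ω),
      ¬ ∃ F : Set (Set S),
          (∀ t ∈ F, #t = ℵ₀) ∧
          Cardinal.aleph (ω + 1) ≤ #F ∧
          ∀ X : Set S, #X = ℵ₀ → #((fun t => t ∩ X) '' F) ≤ ℵ₀ := by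
  intro S hS
  rintro ⟨F, hFmem, hFcard, hFres⟩
  obtain ⟨F₀, hF₀F, hF₀card⟩ := Cardinal.le_mk_iff_exists_subset.mp hFcard
  letI : Language.graph.Structure (S ⊕ ↥F₀) := myStructure F₀
  have hMcard : #(S ⊕ ↥F₀) = Cardinal.aleph (ω + 1) := by
    rw [Cardinal.mk_sum, Cardinal.lift_id, Cardinal.lift_id, hS, hF₀card]
    exact Cardinal.add_eq_right (aleph0_le_aleph _)
      (aleph_le_aleph.2 (le_add_of_nonneg_right zero_le))
  have hAcard : #(Set.range (Sum.inl : S → S ⊕ ↥F₀)) = Cardinal.aleph ω := by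
    rw [Cardinal.mk_range_eq _ Sum.inl_injective, hS]
  obtain ⟨B, hB1, hB2⟩ := hCC Language.graph Cardinal.mk_le_aleph0 (S ⊕ ↥F₀)
    inferInstance (Set.range Sum.inl) hMcard hAcard
  -- a countably infinite subset of S
  have hSinf : ℵ₀ ≤ #S := by rw [hS]; exact aleph0_le_aleph _
  obtain ⟨Y, hY⟩ := Cardinal.le_mk_iff_exists_set.mp hSinf
  set X : Set S := Y ∪ {a | Sum.inl a ∈ (B : Set (S ⊕ ↥F₀))} with hXdef
  have hBAle : #({a : S | Sum.inl a ∈ (B : Set (S ⊕ ↥F₀))}) ≤ ℵ₀ := by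
    refine le_trans (Cardinal.mk_le_of_injective
      (f := fun a : {a : S | Sum.inl a ∈ (B : Set (S ⊕ ↥F₀))} =>
        (⟨Sum.inl a.1, a.2, Set.mem_range_self _⟩ :
          ((B : Set (S ⊕ ↥F₀)) ∩ Set.range Sum.inl : Set (S ⊕ ↥F₀)))) ?_) hB2
    intro a b h
    simpa [Subtype.ext_iff] using h
  have hX : #X = ℵ₀ := by
    refine le_antisymm (le_trans (Cardinal.mk_union_le _ _) ?_)
      (by rw [← hY]; exact Cardinal.mk_le_mk_of_subset Set.subset_union_left)
    rw [hY]
    exact Cardinal.add_le_aleph0.2 ⟨le_rfl, hBAle⟩ |>.trans_eq (by simp) |>.trans le_rfl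
  -- key injectivity
  have key : ∀ t t' : ↥F₀, (Sum.inr t : S ⊕ ↥F₀) ∈ (B : Set (S ⊕ ↥F₀)) →
      (Sum.inr t' : S ⊕ ↥F₀) ∈ (B : Set (S ⊕ ↥F₀)) →
      (t : Set S) ∩ X = (t' : Set S) ∩ X → t = t' := by
    intro t t' ht ht' hinter
    by_contra hne
    have hsetne : (t : Set S) ≠ (t' : Set S) := fun h => hne (Subtype.ext h)
    obtain ⟨x, hx⟩ : ∃ x, x ∈ (t : Set S) ↔ x ∉ (t' : Set S) := by
      by_contra h
      push_neg at h
      exact hsetne (Set.ext fun x => by have := h x; tauto)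
    have hM : diffFormula.Realize (![Sum.inr t, Sum.inr t'] : Fin 2 → S ⊕ ↥F₀) := by
      rw [realize_diffFormula]
      refine ⟨Sum.inl x, ?_⟩
      show myRel F₀ (Sum.inl x) (Sum.inr t) ↔ ¬ myRel F₀ (Sum.inl x) (Sum.inr t')
      simpa [myRel] using hx
    set w : Fin 2 → ↥B := ![⟨Sum.inr t, ht⟩, ⟨Sum.inr t', ht'⟩] with hw
    have hcoew : ((↑) ∘ w : Fin 2 → S ⊕ ↥F₀) = ![Sum.inr t, Sum.inr t'] := by
      funext i
      fin_cases i <;> rfl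
    have hMB : diffFormula.Realize w := by
      refine (B.isElementary diffFormula w).mp ?_
      rw [hcoew] at *
      exact hM
    obtain ⟨b, hb⟩ := (realize_diffFormula w).mp hMB
    have hb' : myRel F₀ (↑b) (Sum.inr t) ↔ ¬ myRel F₀ (↑b) (Sum.inr t') := hb
    obtain ⟨m, hmB⟩ := b
    rcases m with a | s
    · have hxt : a ∈ (t : Set S) ↔ a ∉ (t' : Set S) := by simpa [myRel] using hb'
      have haX : a ∈ X := Set.mem_union_right _ hmB
      have := Set.ext_iff.mp hinter a
      simp only [Set.mem_inter_iff] at this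
      tauto
    · simp [myRel] at hb'
  have hXapp := hFres X hX
  set T : Set ↥F₀ := {t | (Sum.inr t : S ⊕ ↥F₀) ∈ (B : Set (S ⊕ ↥F₀))} with hT
  have hTle : #T ≤ ℵ₀ := by
    refine le_trans (Cardinal.mk_le_of_injective
      (f := fun t : ↥T => (⟨((t : ↥F₀) : Set S) ∩ X,
        ⟨((t : ↥F₀) : Set S), hF₀F (t : ↥F₀).2, rfl⟩⟩ : ↥((fun t => t ∩ X) '' F))) ?_) hXapp
    intro a b h
    simp only [Subtype.mk.injEq] at h
    exact Subtype.ext (key _ _ a.2 b.2 (congrArg Subtype.val h))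
  have hsub : (B : Set (S ⊕ ↥F₀)) ⊆
      ((B : Set (S ⊕ ↥F₀)) ∩ Set.range Sum.inl) ∪ (Sum.inr '' T) := by
    rintro (a | t) hm
    · exact Or.inl ⟨hm, Set.mem_range_self _⟩
    · exact Or.inr ⟨t, hm, rfl⟩
  have hBle : #(B : Set (S ⊕ ↥F₀)) ≤ ℵ₀ := by
    refine le_trans (Cardinal.mk_le_mk_of_subset hsub) ?_
    refine le_trans (Cardinal.mk_union_le _ _) ?_
    refine le_trans (add_le_add hB2 (Cardinal.mk_image_le.trans hTle)) ?_
    simp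
  rw [hB1] at hBle
  exact absurd hBle (Cardinal.aleph0_lt_aleph_one.not_ge)
end

section
/- Let λ be a singular cardinal of uncountable cofinality κ = cf(λ) such that θ^κ < λ for all cardinals θ < λ. If 𝓕 ⊆ 𝒫(λ) is a family such that the set {α < λ : |𝓕↾α| ≤ |α|} is stationary in λ (as a subset of the ordinal λ), then |𝓕| ≤ λ. -/
open Cardinal Set

/-- The Erdős–Hajnal–Milner theorem: let `λ` be a singular cardinal of uncountable
cofinality `κ = cf(λ)` with `θ^κ < λ` for all `θ < λ`.  If `𝓕 ⊆ 𝒫(λ)` is such that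
`{α < λ : |𝓕↾α| ≤ |α|}` is stationary in `λ` (it meets every closed unbounded subset
of `λ`), then `|𝓕| ≤ λ`.  Subsets of `λ` are realized as sets of ordinals `< l.ord`. -/
theorem erdos_hajnal_milner (l : Cardinal.{0})
    (hsing : l.ord.cof < l) (hcof : ℵ₀ < l.ord.cof)
    (hpow : ∀ θ : Cardinal.{0}, θ < l → θ ^ l.ord.cof < l)
    (F : Set (Set Ordinal.{0}))
    (hsub : ∀ t ∈ F, t ⊆ Set.Iio l.ord)
    (hstat : ∀ C : Set Ordinal.{0}, C ⊆ Set.Iio l.ord →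
        (∀ o < l.ord, ∃ c ∈ C, o ≤ c) →
        (∀ s ⊆ C, s.Nonempty → sSup s < l.ord → sSup s ∈ C) →
        ∃ α ∈ C, #((fun t => t ∩ Set.Iio α) '' F) ≤ Cardinal.lift.{1} α.card) :
    #F ≤ Cardinal.lift.{1} l := by
  classical
  have hl0 : ℵ₀ < l := hcof.trans hsing
  have hlim : Order.IsSuccLimit l.ord := Cardinal.isSuccLimit_ord hl0.le
  have hreg : (l.ord.cof).IsRegular := Cardinal.isRegular_cof hlim
  set κ := l.ord.cof with hκdef
  set c := κ.ord with hcdef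
  obtain ⟨f0, hf0⟩ : ∃ f : ∀ b < c, Ordinal.{0}, l.ord.IsFundamentalSequence c f :=
    Ordinal.exists_fundamental_sequence l.ord
  have hcofc : c.cof = κ := hreg.cof_eq
  have hclim : Order.IsSuccLimit c := Cardinal.isSuccLimit_ord hreg.aleph0_le
  have hsucclt : ∀ x : Ordinal.{0}, x < x + 1 := fun x => by
    rw [Ordinal.add_one_eq_succ]; exact Order.lt_succ x
  have hsuccltlim : ∀ {o x : Ordinal.{0}}, Order.IsSuccLimit o → x < o → x + 1 < o := by
    intro o x ho hx
    rw [Ordinal.add_one_eq_succ]; exact ho.succ_lt hx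
  set f : Ordinal.{0} → Ordinal.{0} := fun a => if h : a < c then f0 a h else 0 with hfdef
  have hflt : ∀ a < c, f a < l.ord := by
    intro a ha
    simp only [hfdef, dif_pos ha]
    exact hf0.lt ha
  set g : Ordinal.{0} → Ordinal.{0} := fun i => Ordinal.bsup i (fun a _ => f a + 1) with hgdef
  have hgmono : ∀ {i j : Ordinal.{0}}, i ≤ j → g i ≤ g j := by
    intro i j hij
    simp only [hgdef]
    exact Ordinal.bsup_le_iff.2 fun a ha => Ordinal.le_bsup _ a (ha.trans_le hij)
  have hfg : ∀ a i, a < i → f a < g i := by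
    intro a i h
    have h2 : f a + 1 ≤ g i := Ordinal.le_bsup (fun b (_ : b < i) => f b + 1) a h
    exact (hsucclt (f a)).trans_le h2
  have hglt : ∀ i < c, g i < l.ord := by
    intro i hi
    simp only [hgdef]
    refine Ordinal.bsup_lt_ord ?_ fun a ha => hsuccltlim hlim (hflt a (ha.trans hi))
    exact Cardinal.lt_ord.mp hi
  have hgcont : ∀ i, Order.IsSuccLimit i → ∀ β, β < g i → ∃ j < i, β < g j := by
    intro i hi β hβ
    simp only [hgdef] at hβ
    obtain ⟨a, ha, hβa⟩ := (Ordinal.lt_bsup _).1 hβ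
    refine ⟨a + 1, hsuccltlim hi ha, hβa.trans_le ?_⟩
    exact Ordinal.le_bsup (fun b (_ : b < a + 1) => f b + 1) a (hsucclt a)
  have hgcof : ∀ o < l.ord, ∃ i < c, o ≤ g i := by
    intro o ho
    have h1 : o < Ordinal.blsub c f0 := by rw [hf0.blsub_eq]; exact ho
    obtain ⟨a, ha, hoa⟩ := Ordinal.lt_blsub_iff.1 h1
    refine ⟨a + 1, hsuccltlim hclim ha, ?_⟩
    have : f a = f0 a ha := dif_pos ha
    exact (hoa.trans_eq this.symm).trans (hfg a (a + 1) (hsucclt a)).le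
  -- The key stationarity transfer: every "diagonal club" contains a point of the
  -- stationary set transported through `g`.
  have hKey : ∀ b : Ordinal.{0} → Ordinal.{0}, (∀ j, b j < c) →
      ∃ i, (i < c ∧ Order.IsSuccLimit i ∧ ∀ j < i, b j < i) ∧
        #((fun t => t ∩ Set.Iio (g i)) '' F) ≤ Cardinal.lift.{1} (g i).card := by
    intro b hb
    set Cb : Set Ordinal.{0} := {i | i < c ∧ Order.IsSuccLimit i ∧ ∀ j < i, b j < i} with hCbdef
    have hCbu : ∀ i0 < c, ∃ i ∈ Cb, i0 < i := by
      intro i0 hi0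
      set u : ℕ → Ordinal.{0} := fun n => Nat.rec (i0 + 1)
        (fun _ p => max (Ordinal.bsup p (fun j _ => b j + 1)) (p + 1)) n with hudef
      have hu0 : u 0 = i0 + 1 := rfl
      have husucc : ∀ n, u (n + 1) = max (Ordinal.bsup (u n) (fun j _ => b j + 1)) (u n + 1) :=
        fun n => rfl
      have hult : ∀ n, u n < c := by
        intro n
        induction n with
        | zero => rw [hu0]; exact hsuccltlim hclim hi0
        | succ n ih =>
          rw [husucc]
          refine max_lt ?_ (hsuccltlim hclim ih)
          refine Ordinal.bsup_lt_ord ?_ fun j _ => hsuccltlim hclim (hb j)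
          rw [hcofc]
          exact Cardinal.lt_ord.mp ih
      have humono : ∀ n, u n < u (n + 1) := by
        intro n
        rw [husucc]
        exact lt_max_of_lt_right (hsucclt (u n))
      set e := ⨆ n, u n with hedef
      have hue : ∀ n, u n ≤ e := fun n => Ordinal.le_iSup u n
      have hlte : ∀ {β}, β < e → ∃ n, β < u n := by
        intro β hβ
        rw [hedef] at hβ
        exact Ordinal.lt_iSup_iff.1 hβ
      have hec : e < c := by
        refine Ordinal.iSup_lt_ord ?_ hult
        rw [hcofc]
        simpa using hcof
      have helim : Order.IsSuccLimit e := by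
        refine Ordinal.isSuccLimit_iff.2 ⟨?_, Order.isSuccPrelimit_of_succ_lt ?_⟩
        · have : (0 : Ordinal) < e := lt_of_lt_of_le (lt_of_le_of_lt (zero_le (a := i0)) (hsucclt i0)) (hue 0)
          exact this.ne'
        · intro a ha
          obtain ⟨n, hn⟩ := hlte ha
          have h1 : Order.succ a ≤ u n := Order.succ_le_of_lt hn
          exact lt_of_le_of_lt h1 (lt_of_lt_of_le (humono n) (hue (n + 1)))
      have hbe : ∀ j < e, b j < e := by
        intro j hj
        obtain ⟨n, hn⟩ := hlte hj
        have h1 : b j + 1 ≤ Ordinal.bsup (u n) (fun j _ => b j + 1) :=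
          Ordinal.le_bsup (fun j (_ : j < u n) => b j + 1) j hn
        have h2 : b j + 1 ≤ u (n + 1) := h1.trans (by rw [husucc]; exact le_max_left _ _)
        exact lt_of_lt_of_le (hsucclt (b j)) (h2.trans (hue (n + 1)))
      exact ⟨e, ⟨hec, helim, hbe⟩, lt_of_lt_of_le (hsucclt i0) (hue 0)⟩
    have hCsub : g '' Cb ⊆ Set.Iio l.ord := by
      rintro x ⟨i, hi, rfl⟩
      exact hglt i hi.1
    have hCunb : ∀ o < l.ord, ∃ x ∈ g '' Cb, o ≤ x := by
      intro o ho
      obtain ⟨i, hic, hio⟩ := hgcof o ho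
      obtain ⟨i', hi', hii'⟩ := hCbu i hic
      exact ⟨g i', Set.mem_image_of_mem _ hi', hio.trans (hgmono hii'.le)⟩
    have hCclosed : ∀ s ⊆ g '' Cb, s.Nonempty → sSup s < l.ord → sSup s ∈ g '' Cb := by
      intro s hs hsne hssup
      have hbdd : BddAbove s := ⟨l.ord, fun x hx => (hCsub (hs hx)).le⟩
      set s' : Set Ordinal.{0} := {i | i ∈ Cb ∧ g i ∈ s} with hs'def
      have hgs' : ∀ x ∈ s, ∃ i ∈ s', g i = x := by
        intro x hx
        obtain ⟨i, hi, rfl⟩ := hs hx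
        exact ⟨i, ⟨hi, hx⟩, rfl⟩
      have hs'ne : s'.Nonempty := by
        obtain ⟨x, hx⟩ := hsne
        obtain ⟨i, hi, _⟩ := hgs' x hx
        exact ⟨i, hi⟩
      have hs'bdd : BddAbove s' := ⟨c, fun i hi => hi.1.1.le⟩
      have hs'le : ∀ i ∈ s', g i ≤ sSup s := fun i hi => le_csSup hbdd hi.2
      have hsup_le : ∀ β, (∀ i ∈ s', g i ≤ β) → sSup s ≤ β := by
        intro β hβ
        refine csSup_le hsne fun x hx => ?_
        obtain ⟨i, hi, hgi⟩ := hgs' x hx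
        exact hgi ▸ hβ i hi
      set e := sSup s' with hedef
      by_cases hmem : e ∈ s'
      · have h1 : sSup s ≤ g e := hsup_le _ fun i hi => hgmono (le_csSup hs'bdd hi)
        have h2 : g e ≤ sSup s := hs'le e hmem
        rw [le_antisymm h1 h2]
        exact Set.mem_image_of_mem _ hmem.1
      · have hlt_e : ∀ β < e, ∃ i ∈ s', β < i := fun β hβ => exists_lt_of_lt_csSup hs'ne hβ
        have hec : e < c := by
          rcases lt_or_ge e c with h | h
          · exact h
          · exfalso
            have hee : e = c := le_antisymm (csSup_le hs'ne fun i hi => hi.1.1.le) h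
            obtain ⟨i, hic, hile⟩ := hgcof (sSup s + 1) (hsuccltlim hlim hssup)
            obtain ⟨i', hi', hii'⟩ := hlt_e i (hee ▸ hic)
            have h3 : g i ≤ sSup s := (hgmono hii'.le).trans (hs'le i' hi')
            exact absurd ((hsucclt (sSup s)).trans_le (hile.trans h3)) (lt_irrefl _)
        have helim : Order.IsSuccLimit e := by
          refine Ordinal.isSuccLimit_iff.2 ⟨?_, Order.isSuccPrelimit_of_succ_lt ?_⟩
          · obtain ⟨i, hi⟩ := hs'ne
            have : (0 : Ordinal) < e := lt_of_lt_of_le hi.1.2.1.pos (le_csSup hs'bdd hi)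
            exact this.ne'
          · intro a ha
            obtain ⟨i, hi, hai⟩ := hlt_e a ha
            exact lt_of_lt_of_le (hi.1.2.1.succ_lt hai) (le_csSup hs'bdd hi)
        have heCb : e ∈ Cb := by
          refine ⟨hec, helim, fun j hj => ?_⟩
          obtain ⟨i, hi, hji⟩ := hlt_e j hj
          exact lt_of_lt_of_le (hi.1.2.2 j hji) (le_csSup hs'bdd hi)
        have hsup_eq : sSup s = g e := by
          apply le_antisymm
          · exact hsup_le _ fun i hi => hgmono (le_csSup hs'bdd hi)
          · refine le_of_forall_lt fun β hβ => ?_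
            obtain ⟨j, hj, hβj⟩ := hgcont e helim β hβ
            obtain ⟨i, hi, hji⟩ := hlt_e j hj
            exact lt_of_lt_of_le (hβj.trans_le (hgmono hji.le)) (hs'le i hi)
        rw [hsup_eq]
        exact Set.mem_image_of_mem _ heCb
    obtain ⟨α, hα, hcard⟩ := hstat (g '' Cb) hCsub hCunb hCclosed
    obtain ⟨i, hi, rfl⟩ := hα
    exact ⟨i, hi, hcard⟩
  set S : Set Ordinal.{0} :=
    {i | i < c ∧ #((fun t => t ∩ Set.Iio (g i)) '' F) ≤ Cardinal.lift.{1} (g i).card} with hSdef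
  have hKey' : ∀ b : Ordinal.{0} → Ordinal.{0}, (∀ j, b j < c) →
      ∃ i ∈ S, Order.IsSuccLimit i ∧ ∀ j < i, b j < i := by
    intro b hb
    obtain ⟨i, hi, hc2⟩ := hKey b hb
    exact ⟨i, ⟨hi.1, hc2⟩, hi.2.1, hi.2.2⟩
  -- choose coding injections on the stationary set
  have hE : ∀ i ∈ S, ∃ e : Set Ordinal.{0} → Ordinal.{0},
      (∀ t ∈ F, e t < g i) ∧
      (∀ t ∈ F, ∀ t' ∈ F, e t = e t' → t ∩ Set.Iio (g i) = t' ∩ Set.Iio (g i)) := by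
    intro i hi
    have h1 : #((fun t => t ∩ Set.Iio (g i)) '' F) ≤ #(Set.Iio (g i)) := by
      rw [Ordinal.mk_Iio_ordinal]
      exact hi.2
    obtain ⟨emb⟩ := (Cardinal.le_def _ _).1 h1
    refine ⟨fun t => if h : t ∈ F then
        (emb ⟨t ∩ Set.Iio (g i), Set.mem_image_of_mem _ h⟩ : Set.Iio (g i)).1 else 0, ?_, ?_⟩
    · intro t ht
      simp only [dif_pos ht]
      exact (emb ⟨t ∩ Set.Iio (g i), Set.mem_image_of_mem _ ht⟩).2
    · intro t ht t' ht' hee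
      simp only [dif_pos ht, dif_pos ht'] at hee
      have h2 := emb.injective (Subtype.ext hee)
      exact congrArg Subtype.val h2
  choose! ev hev1 hev2 using hE
  -- Fodor-style argument: for each t there is j < c such that e i t < g j for
  -- unboundedly many i in S.
  have hFodor : ∀ t ∈ F, ∃ j, j < c ∧ ∀ i0 < c, ∃ i ∈ S, i0 ≤ i ∧ ev i t < g j := by
    intro t ht
    by_contra hcon
    push_neg at hcon
    choose! b hb1 hb2 using hcon
    set b' : Ordinal.{0} → Ordinal.{0} := fun j => if j < c then b j else 0 with hb'def
    have hb'lt : ∀ j, b' j < c := by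
      intro j
      simp only [hb'def]
      split
      · exact hb1 j ‹j < c›
      · exact hclim.pos
    obtain ⟨i, hiS, hilim, hib⟩ := hKey' b' hb'lt
    have hev_lt : ev i t < g i := hev1 i hiS t ht
    obtain ⟨j, hji, hlt⟩ := hgcont i hilim _ hev_lt
    have hjc : j < c := hji.trans hiS.1
    have hbji : b j < i := by
      have h2 := hib j hji
      simpa only [hb'def, if_pos hjc] using h2
    exact absurd hlt (not_lt.mpr (hb2 j hjc i hiS hbji.le))
  choose! J hJ1 hJ2 using hFodor
  -- coding: split F into fibers of J and code each fiber by bounded functions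
  set Fib : ↥(Set.Iio c) → Set (Set Ordinal.{0}) := fun j => {t | t ∈ F ∧ J t = j.1} with hFibdef
  have hFsub : F ⊆ ⋃ j, Fib j := fun t ht => Set.mem_iUnion.2 ⟨⟨J t, hJ1 t ht⟩, ht, rfl⟩
  have h1 : #F ≤ Cardinal.sum fun j => #(Fib j) :=
    (Cardinal.mk_le_mk_of_subset hFsub).trans Cardinal.mk_iUnion_le_sum_mk
  have h2 : ∀ j : ↥(Set.Iio c), #(Fib j) ≤ Cardinal.lift.{1} l := by
    intro j
    -- the one-sided recovery lemma
    have main : ∀ t ∈ F, ∀ t' ∈ F, J t = j.1 →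
        (∀ i, i ∈ S → ev i t < g j.1 → t ∩ Set.Iio (g i) = t' ∩ Set.Iio (g i)) →
        t ⊆ t' := by
      intro t ht t' ht' hJt hres x hx
      have hxl : x < l.ord := hsub t ht hx
      obtain ⟨i0, hi0c, hxi0⟩ := hgcof (x + 1) (hsuccltlim hlim hxl)
      obtain ⟨i, hiS, hi0i, hevlt⟩ := hJ2 t ht i0 hi0c
      rw [hJt] at hevlt
      have hxgi : x < g i := lt_of_lt_of_le ((hsucclt x).trans_le hxi0) (hgmono hi0i)
      have hmem : x ∈ t' ∩ Set.Iio (g i) := by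
        rw [← hres i hiS hevlt]
        exact ⟨hx, hxgi⟩
      exact hmem.1
    have hcode : #(Fib j) ≤ #(↥(Set.Iio c) → Option ↥(Set.Iio (g j.1))) := by
      refine Cardinal.mk_le_of_injective (f := fun t : ↥(Fib j) => fun i : ↥(Set.Iio c) =>
        if h : i.1 ∈ S ∧ ev i.1 t.1 < g j.1 then
          some (⟨ev i.1 t.1, h.2⟩ : ↥(Set.Iio (g j.1))) else none) ?_
      intro t t' hee
      have htF : t.1 ∈ F := t.2.1
      have ht'F : t'.1 ∈ F := t'.2.1
      have hJt : J t.1 = j.1 := t.2.2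
      have hJt' : J t'.1 = j.1 := t'.2.2
      have hpoint : ∀ i, i ∈ S → ev i t.1 < g j.1 →
          t.1 ∩ Set.Iio (g i) = t'.1 ∩ Set.Iio (g i) := by
        intro i hiS hlt
        have hfi := congrFun hee ⟨i, hiS.1⟩
        dsimp only at hfi
        rw [dif_pos ⟨hiS, hlt⟩] at hfi
        by_cases h' : i ∈ S ∧ ev i t'.1 < g j.1
        · rw [dif_pos h'] at hfi
          have h3 : ev i t.1 = ev i t'.1 := congrArg Subtype.val (Option.some_injective _ hfi)
          exact hev2 i hiS t.1 htF t'.1 ht'F h3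
        · rw [dif_neg h'] at hfi
          exact absurd hfi (Option.some_ne_none _)
      have hpoint' : ∀ i, i ∈ S → ev i t'.1 < g j.1 →
          t'.1 ∩ Set.Iio (g i) = t.1 ∩ Set.Iio (g i) := by
        intro i hiS hlt
        have hfi := congrFun hee.symm ⟨i, hiS.1⟩
        dsimp only at hfi
        rw [dif_pos ⟨hiS, hlt⟩] at hfi
        by_cases h' : i ∈ S ∧ ev i t.1 < g j.1
        · rw [dif_pos h'] at hfi
          have h3 : ev i t'.1 = ev i t.1 := congrArg Subtype.val (Option.some_injective _ hfi)
          exact hev2 i hiS t'.1 ht'F t.1 htF h3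
        · rw [dif_neg h'] at hfi
          exact absurd hfi (Option.some_ne_none _)
      apply Subtype.ext
      apply Set.Subset.antisymm
      · exact main t.1 htF t'.1 ht'F hJt hpoint
      · exact main t'.1 ht'F t.1 htF hJt' hpoint'
    have hccard : c.card = κ := Cardinal.card_ord κ
    have harrow : #(↥(Set.Iio c) → Option ↥(Set.Iio (g j.1))) ≤ Cardinal.lift.{1} l := by
      rw [← Cardinal.power_def, Cardinal.mk_option, Ordinal.mk_Iio_ordinal,
        Ordinal.mk_Iio_ordinal, hccard]
      have hθ : (g j.1).card < l := Cardinal.lt_ord.mp (hglt j.1 j.2)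
      have hθ1 : (g j.1).card + 1 < l := by
        rcases lt_or_ge (g j.1).card ℵ₀ with h | h
        · exact (Cardinal.add_lt_aleph0 h Cardinal.one_lt_aleph0).trans_le hl0.le
        · rw [Cardinal.add_one_of_aleph0_le h]
          exact hθ
      have hfin : ((g j.1).card + 1) ^ κ < l := hpow _ hθ1
      have heq : (Cardinal.lift.{1} (g j.1).card + 1) ^ Cardinal.lift.{1} κ =
          Cardinal.lift.{1} (((g j.1).card + 1) ^ κ) := by
        rw [Cardinal.lift_power, Cardinal.lift_add, Cardinal.lift_one]
      rw [heq]
      exact Cardinal.lift_le.mpr hfin.le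
    exact hcode.trans harrow
  have hccard : c.card = κ := Cardinal.card_ord κ
  have h3 : (Cardinal.sum fun j : ↥(Set.Iio c) => #(Fib j)) ≤
      Cardinal.sum fun _ : ↥(Set.Iio c) => Cardinal.lift.{1} l :=
    Cardinal.sum_le_sum _ _ h2
  have h4 : (Cardinal.sum fun _ : ↥(Set.Iio c) => Cardinal.lift.{1} l) = Cardinal.lift.{1} l := by
    rw [Cardinal.sum_const']
    have h5 : #(↥(Set.Iio c)) = Cardinal.lift.{1} κ := by
      rw [Ordinal.mk_Iio_ordinal, hccard]
    rw [h5, ← Cardinal.lift_mul]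
    congr 1
    exact Cardinal.mul_eq_right hl0.le hsing.le (Cardinal.aleph0_pos.trans hcof).ne'
  exact h1.trans (h3.trans h4.le)
end

section
/- Let κ be a supercompact cardinal and λ ≥ κ. Then KH_λ fails: for every family 𝓕 ⊆ 𝒫(λ) with |𝓕| ≥ λ⁺, the set {x ∈ P_κ(λ) : |𝓕↾x| ≥ |x|⁺} belongs to every normal fine ultrafilter on P_κ(λ) derived from a λ⁺-supercompactness embedding; in particular there exists an infinite x ⊆ λ with |x| < λ and |𝓕↾x| > |x|. -/
open Cardinal Set

/-- `P_κ(A)`: the subsets of `A` of cardinality `< κ`. -/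
def Pk (κ : Cardinal.{0}) (A : Type) : Type := {x : Set A // #x < κ}

/-- `U` is a `κ`-complete normal fine ultrafilter on `P_κ(A)`. -/
def IsNormalFineMeasure (κ : Cardinal.{0}) (A : Type)
    (U : Set (Set (Pk κ A))) : Prop :=
  (∅ ∉ U) ∧ (Set.univ ∈ U) ∧
  (∀ X Y : Set (Pk κ A), X ∈ U → X ⊆ Y → Y ∈ U) ∧
  (∀ X Y : Set (Pk κ A), X ∈ U → Y ∈ U → X ∩ Y ∈ U) ∧
  (∀ X : Set (Pk κ A), X ∈ U ∨ Xᶜ ∈ U) ∧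
  (∀ (ι : Type) (X : ι → Set (Pk κ A)), #ι < κ → (∀ i, X i ∈ U) → (⋂ i, X i) ∈ U) ∧
  (∀ a : A, {x : Pk κ A | a ∈ x.1} ∈ U) ∧
  (∀ X : A → Set (Pk κ A), (∀ a, X a ∈ U) →
    {x : Pk κ A | ∀ a ∈ x.1, x ∈ X a} ∈ U)

/-- `κ` is supercompact: for every set of cardinality `≥ κ` there is a `κ`-complete
normal fine ultrafilter on `P_κ` of it. -/
def IsSupercompact (κ : Cardinal.{0}) : Prop :=
  ∀ A : Type, κ ≤ #A → ∃ U : Set (Set (Pk κ A)), IsNormalFineMeasure κ A U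

section Aux

variable {κ : Cardinal.{0}} {B : Type} {U : Set (Set (Pk κ B))}

/-- Every measure-one set is nonempty. -/
lemma nfm_nonempty (hU : IsNormalFineMeasure κ B U) {X : Set (Pk κ B)} (hX : X ∈ U) :
    X.Nonempty := by
  rcases Set.eq_empty_or_nonempty X with h | h
  · exact absurd (h ▸ hX) hU.1
  · exact h

/-- Pressing-down lemma. -/
lemma nfm_press (hU : IsNormalFineMeasure κ B U) {E : Set (Pk κ B)} (hE : E ∈ U)
    (g : ∀ y : Pk κ B, y ∈ E → B) (hg : ∀ y hy, g y hy ∈ y.1) :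
    ∃ c : B, {y : Pk κ B | ∃ hy : y ∈ E, g y hy = c} ∈ U := by
  by_contra h
  push_neg at h
  have hcomp : ∀ c : B, {y : Pk κ B | ∀ hy : y ∈ E, g y hy ≠ c} ∈ U := by
    intro c
    have h1 := (hU.2.2.2.2.1 {y : Pk κ B | ∃ hy : y ∈ E, g y hy = c}).resolve_left (h c)
    have h2 : ({y : Pk κ B | ∃ hy : y ∈ E, g y hy = c})ᶜ
        = {y : Pk κ B | ∀ hy : y ∈ E, g y hy ≠ c} := by
      ext y; simp
    rwa [h2] at h1
  have hN := hU.2.2.2.2.2.2.2 (fun c => {y : Pk κ B | ∀ hy : y ∈ E, g y hy ≠ c}) hcomp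
  obtain ⟨y, hyN, hyE⟩ := nfm_nonempty hU (hU.2.2.2.1 _ _ hN hE)
  exact hyN (g y hyE) (hg y hyE) hyE rfl

/-- The key lemma: almost every `y` satisfies `|y ∩ S| < |y|`, provided `|S| < |B|`. -/
lemma nfm_lt (hU : IsNormalFineMeasure κ B U) {S : Set B} (hBS : ¬ #B ≤ #S) :
    {y : Pk κ B | #{s : S | (s : B) ∈ y.1} < #y.1} ∈ U := by
  rcases hU.2.2.2.2.1 {y : Pk κ B | #{s : S | (s : B) ∈ y.1} < #y.1} with hD | hE
  · exact hD
  exfalso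
  set E := {y : Pk κ B | #{s : S | (s : B) ∈ y.1} < #y.1}ᶜ with hEdef
  have hι : ∀ y : Pk κ B, y ∈ E → (↥y.1 ↪ ↥{s : S | (s : B) ∈ y.1}) := by
    intro y hy
    have hle : #y.1 ≤ #{s : S | (s : B) ∈ y.1} := not_lt.mp hy
    exact ((Cardinal.le_def _ _).mp hle).some
  have hEb : ∀ b : B, E ∩ {y : Pk κ B | b ∈ y.1} ∈ U :=
    fun b => hU.2.2.2.1 _ _ hE (hU.2.2.2.2.2.2.1 b)
  have key : ∀ b : B, ∃ c : B, {y : Pk κ B | ∃ hy : y ∈ E ∩ {y : Pk κ B | b ∈ y.1},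
      (((hι y hy.1 ⟨b, hy.2⟩ : {s : S | (s : B) ∈ y.1}) : S) : B) = c} ∈ U := by
    intro b
    exact nfm_press hU (hEb b) _ (fun y hy => (hι y hy.1 ⟨b, hy.2⟩).2)
  choose c hc using key
  have hms : ∀ b : B, ∃ s : S, (s : B) = c b := by
    intro b
    obtain ⟨y, hy, e⟩ := nfm_nonempty hU (hc b)
    exact ⟨_, e⟩
  choose m hm using hms
  have minj : Function.Injective m := by
    intro b b' hbb'
    obtain ⟨y, ⟨hy, e⟩, ⟨hy', e'⟩⟩ := nfm_nonempty hU (hU.2.2.2.1 _ _ (hc b) (hc b'))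
    have hcc : c b = c b' := by rw [← hm b, ← hm b', hbb']
    have hv : (((hι y hy.1 ⟨b, hy.2⟩ : {s : S | (s : B) ∈ y.1}) : S) : B)
        = (((hι y hy'.1 ⟨b', hy'.2⟩ : {s : S | (s : B) ∈ y.1}) : S) : B) :=
      e.trans (hcc.trans e'.symm)
    have h1 : ((hι y hy.1 ⟨b, hy.2⟩ : {s : S | (s : B) ∈ y.1}) : S)
        = ((hι y hy'.1 ⟨b', hy'.2⟩ : {s : S | (s : B) ∈ y.1}) : S) :=
      Subtype.coe_injective hv
    have h2 : (hι y hy.1) ⟨b, hy.2⟩ = (hι y hy.1) ⟨b', hy'.2⟩ :=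
      Subtype.coe_injective h1
    have h3 := (hι y hy.1).injective h2
    exact congrArg Subtype.val h3
  exact hBS (Cardinal.mk_le_of_injective minj)

/-- The main measure-one statement. -/
lemma nfm_part1 (hU : IsNormalFineMeasure κ B U) {S : Set B} (hS0 : Nonempty S)
    (hBS : ¬ #B ≤ #S) {F : Set (Set S)} (hF : #B ≤ #F) :
    {y : Pk κ B | Order.succ (#{s : S | (s : B) ∈ y.1}) ≤
        #((fun t => t ∩ {s : S | (s : B) ∈ y.1}) '' F)} ∈ U := by
  obtain ⟨f⟩ := (Cardinal.le_def _ _).mp hF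
  have hsig : ∀ b b' : B, ∃ s : S, b ≠ b' →
      ¬ ((s ∈ (f b : Set S)) ↔ s ∈ (f b' : Set S)) := by
    intro b b'
    by_cases h : b = b'
    · exact ⟨hS0.some, fun hne => absurd h hne⟩
    · have hne : (f b : Set S) ≠ (f b' : Set S) := fun he =>
        h (f.injective (Subtype.coe_injective he))
      have hex : ∃ s : S, ¬ ((s ∈ (f b : Set S)) ↔ s ∈ (f b' : Set S)) := by
        by_contra hall
        push_neg at hall
        exact hne (Set.ext fun s => hall s)
      obtain ⟨s, hs⟩ := hex
      exact ⟨s, fun _ => hs⟩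
  choose σ hσ using hsig
  have hN : ∀ b : B, {y : Pk κ B | ∀ b' ∈ y.1, ((σ b b' : B)) ∈ y.1} ∈ U := by
    intro b
    exact hU.2.2.2.2.2.2.2 (fun b' => {y : Pk κ B | ((σ b b' : B)) ∈ y.1})
      (fun b' => hU.2.2.2.2.2.2.1 _)
  have hC : {y : Pk κ B | ∀ b ∈ y.1, ∀ b' ∈ y.1, ((σ b b' : B)) ∈ y.1} ∈ U :=
    hU.2.2.2.2.2.2.2 (fun b => {y : Pk κ B | ∀ b' ∈ y.1, ((σ b b' : B)) ∈ y.1}) hN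
  have hD := nfm_lt hU hBS
  refine hU.2.2.1 _ _ (hU.2.2.2.1 _ _ hC hD) ?_
  rintro y ⟨hyC, hyD⟩
  set x : Set S := {s : S | (s : B) ∈ y.1} with hx
  have emb : ↥y.1 ↪ ↥((fun t => t ∩ x) '' F) := by
    refine ⟨fun b => ⟨(f b : Set S) ∩ x, ⟨(f b : Set S), (f b).2, rfl⟩⟩, ?_⟩
    rintro ⟨b, hb⟩ ⟨b', hb'⟩ he
    have he' : (f b : Set S) ∩ x = (f b' : Set S) ∩ x := by
      simpa using congrArg Subtype.val he
    by_contra hne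
    have hbb' : b ≠ b' := fun h => hne (Subtype.ext h)
    have hsx : σ b b' ∈ x := hyC b hb b' hb'
    have hiff : σ b b' ∈ (f b : Set S) ↔ σ b b' ∈ (f b' : Set S) := by
      constructor
      · intro h
        have hmem : σ b b' ∈ (f b : Set S) ∩ x := ⟨h, hsx⟩
        rw [he'] at hmem; exact hmem.1
      · intro h
        have hmem : σ b b' ∈ (f b' : Set S) ∩ x := ⟨h, hsx⟩
        rw [← he'] at hmem; exact hmem.1
    exact hσ b b' hbb' hiff
  have h1 : #y.1 ≤ #((fun t => t ∩ x) '' F) := Cardinal.mk_le_of_injective emb.injective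
  exact (Order.succ_le_of_lt hyD).trans h1

end Aux

/-- If `κ` is supercompact and `λ ≥ κ`, then `KH_λ` fails.  Here `B` has size `λ⁺`
and `S ⊆ B` has size `λ`; for every family `𝓕 ⊆ 𝒫(S)` with `|𝓕| ≥ λ⁺`, the set
`{x ∈ P_κ(λ) : |𝓕↾x| ≥ |x|⁺}` belongs to every ultrafilter on `P_κ(λ)` derived (by
projection `y ↦ y ∩ S`) from a normal fine ultrafilter witnessing
`λ⁺`-supercompactness; in particular there is an infinite `x ⊆ S` with `|x| < λ` and
`|𝓕↾x| > |x|`. -/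
theorem not_KH_above_supercompact (κ : Cardinal.{0}) (hκ₀ : ℵ₀ < κ)
    (hκ : IsSupercompact κ) (l : Cardinal.{0}) (hl : κ ≤ l)
    (B : Type) (hB : #B = Order.succ l) (S : Set B) (hS : #S = l)
    (F : Set (Set S)) (hF : Order.succ l ≤ #F) :
    (∀ U : Set (Set (Pk κ B)), IsNormalFineMeasure κ B U →
      {y : Pk κ B | Order.succ (#{s : S | (s : B) ∈ y.1}) ≤
          #((fun t => t ∩ {s : S | (s : B) ∈ y.1}) '' F)} ∈ U) ∧
    ∃ x : Set S, ℵ₀ ≤ #x ∧ #x < l ∧ #x < #((fun t => t ∩ x) '' F) := by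
  have hκB : κ ≤ #B := by rw [hB]; exact hl.trans (Order.le_succ l)
  have hBS : ¬ #B ≤ #S := by
    rw [hB, hS]
    exact not_le.mpr (Order.lt_succ l)
  have hSinf : ℵ₀ ≤ #S := by rw [hS]; exact hκ₀.le.trans hl
  have hS0 : Nonempty S := Cardinal.mk_ne_zero_iff.mp
    (by rw [hS]; exact (Cardinal.aleph0_pos.trans_le (hκ₀.le.trans hl)).ne')
  have hFB : #B ≤ #F := by rw [hB]; exact hF
  constructor
  · intro U hU
    exact nfm_part1 hU hS0 hBS hFB
  · obtain ⟨U, hU⟩ := hκ B hκB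
    obtain ⟨ψ⟩ := (Cardinal.le_def ℕ S).mp (by rw [Cardinal.mk_nat]; exact hSinf)
    have hW : (⋂ n : ℕ, {y : Pk κ B | (ψ n : B) ∈ y.1}) ∈ U := by
      refine hU.2.2.2.2.2.1 ℕ _ ?_ (fun n => hU.2.2.2.2.2.2.1 _)
      rw [Cardinal.mk_nat]; exact hκ₀
    have hG := nfm_part1 hU hS0 hBS hFB
    obtain ⟨y, hyG, hyW⟩ := nfm_nonempty hU (hU.2.2.2.1 _ _ hG hW)
    refine ⟨{s : S | (s : B) ∈ y.1}, ?_, ?_, ?_⟩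
    · have hinj : Function.Injective (fun n : ℕ =>
          (⟨ψ n, Set.mem_iInter.mp hyW n⟩ : ↥{s : S | (s : B) ∈ y.1})) := by
        intro n m h
        exact ψ.injective (congrArg Subtype.val h)
      calc ℵ₀ = #ℕ := Cardinal.mk_nat.symm
        _ ≤ _ := Cardinal.mk_le_of_injective hinj
    · have e : ↥{s : S | (s : B) ∈ y.1} ↪ ↥y.1 := by
        refine ⟨fun s => ⟨(s : B), s.2⟩, ?_⟩
        intro a b h
        simp only [Subtype.mk.injEq] at h
        exact Subtype.coe_injective (Subtype.coe_injective h)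
      calc #{s : S | (s : B) ∈ y.1} ≤ #y.1 := Cardinal.mk_le_of_injective e.injective
        _ < κ := y.2
        _ ≤ l := hl
    · exact lt_of_lt_of_le (Order.lt_succ _) hyG
end
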